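/- If f is continuous on [0,δ], thrice differentiable on (0,δ], f(0) = 0, and f''' is strictly decreasing on (0,δ], then lim_{w→0⁺} f'''(w) > g₃ and f'''(δ) < g₃, where g₃ = 6f(δ)/δ³ - 6f'(δ)/δ² + 3f''(δ)/δ. -/

import Mathlib

open Set

theorem stmt_7 (f : ℝ → ℝ) (δ : ℝ) (hδ : 0 < δ) (hf0 : f 0 = 0)
    (hcont : ContinuousOn f (Set.Icc 0 δ))
    (hdiff : ∀ w ∈ Set.Ioc (0:ℝ) δ, DifferentiableAt ℝ f w ∧
      DifferentiableAt ℝ (deriv f) w ∧ DifferentiableAt ℝ (deriv (deriv f)) w)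
    (hanti : StrictAntiOn (deriv (deriv (deriv f))) (Set.Ioc 0 δ))
    (L : EReal)
    (hL : Filter.Tendsto (fun w : ℝ => (((deriv (deriv (deriv f)) w : ℝ) : EReal)))
      (nhdsWithin 0 (Set.Ioi 0)) (nhds L)) :
    ((6 * f δ / δ ^ 3 - 6 * deriv f δ / δ ^ 2 + 3 * deriv (deriv f) δ / δ : ℝ) : EReal) < L ∧
    deriv (deriv (deriv f)) δ <
      6 * f δ / δ ^ 3 - 6 * deriv f δ / δ ^ 2 + 3 * deriv (deriv f) δ / δ := by
  set a := f δ with ha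
  set b := deriv f δ with hb
  set c := deriv (deriv f) δ with hc
  set M : ℝ := 6 * a / δ ^ 3 - 6 * b / δ ^ 2 + 3 * c / δ with hM
  have hδ' : (δ:ℝ) ≠ 0 := ne_of_gt hδ
  -- step 1: exists c₃ ∈ Ioo 0 δ with f''' c₃ = M
  obtain ⟨x3, hx3mem, hx3⟩ : ∃ x ∈ Ioo (0:ℝ) δ, deriv (deriv (deriv f)) x = M := by
    set F : ℝ → ℝ := fun x => f x - (a + b*(x-δ) + c*(x-δ)^2/2 + M*(x-δ)^3/6) with hF
    set G : ℝ → ℝ := fun x => deriv f x - (b + c*(x-δ) + M*(x-δ)^2/2) with hG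
    set H : ℝ → ℝ := fun x => deriv (deriv f) x - (c + M*(x-δ)) with hH
    have hsub : ∀ x ∈ Ioo (0:ℝ) δ, x ∈ Ioc (0:ℝ) δ := fun x hx => ⟨hx.1, hx.2.le⟩
    have hpd : ∀ x : ℝ, HasDerivAt (fun x => a + b*(x-δ) + c*(x-δ)^2/2 + M*(x-δ)^3/6)
        (b + c*(x-δ) + M*(x-δ)^2/2) x := by
      intro x
      have h1 : HasDerivAt (fun x : ℝ => x - δ) 1 x := (hasDerivAt_id x).sub_const δ
      have := (((hasDerivAt_const x a).add (h1.const_mul b)).add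
          (((h1.pow 2).const_mul c).div_const 2)).add
          (((h1.pow 3).const_mul M).div_const 6)
      exact this.congr_deriv (by norm_num; ring)
    have hFd : ∀ x ∈ Ioc (0:ℝ) δ, HasDerivAt F (G x) x := by
      intro x hx
      exact ((hdiff x hx).1.hasDerivAt).sub (hpd x)
    have hGd : ∀ x ∈ Ioc (0:ℝ) δ, HasDerivAt G (H x) x := by
      intro x hx
      have h1 : HasDerivAt (fun x : ℝ => x - δ) 1 x := (hasDerivAt_id x).sub_const δ
      have hp := ((hasDerivAt_const x b).add (h1.const_mul c)).add
          (((h1.pow 2).const_mul M).div_const 2)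
      have hp' : HasDerivAt (fun x => b + c*(x-δ) + M*(x-δ)^2/2) (c + M*(x-δ)) x := by
        exact hp.congr_deriv (by norm_num; ring)
      exact ((hdiff x hx).2.1.hasDerivAt).sub hp'
    have hHd : ∀ x ∈ Ioc (0:ℝ) δ, HasDerivAt H (deriv (deriv (deriv f)) x - M) x := by
      intro x hx
      have h1 : HasDerivAt (fun x : ℝ => x - δ) 1 x := (hasDerivAt_id x).sub_const δ
      have hp : HasDerivAt (fun x => c + M*(x-δ)) M x := by
        exact ((hasDerivAt_const x c).add (h1.const_mul M)).congr_deriv (by ring)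
      exact ((hdiff x hx).2.2.hasDerivAt).sub hp
    -- Rolle 1 on F over [0, δ]
    have hFcont : ContinuousOn F (Icc 0 δ) := by
      apply hcont.sub
      apply Continuous.continuousOn
      fun_prop
    have key : M * δ ^ 3 / 6 = a - b*δ + c*δ^2/2 := by
      rw [hM]; field_simp; ring
    have hF0 : F 0 = 0 := by
      simp only [hF, hf0]
      linear_combination key
    have hFδ : F δ = 0 := by simp [hF, ha]
    obtain ⟨x1, hx1, hdx1⟩ := exists_deriv_eq_zero (f := F) hδ hFcont (hF0.trans hFδ.symm)
    have hGx1 : G x1 = 0 := by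
      rw [← (hFd x1 (hsub x1 hx1)).deriv]; exact hdx1
    -- Rolle 2 on G over [x1, δ]
    have hGcont : ContinuousOn G (Icc x1 δ) := by
      apply ContinuousOn.sub
      · intro x hx
        exact ((hdiff x ⟨hx1.1.trans_le hx.1, hx.2⟩).2.1.continuousAt).continuousWithinAt
      · exact Continuous.continuousOn (by fun_prop)
    have hGδ : G δ = 0 := by simp [hG, hb]
    obtain ⟨x2, hx2, hdx2⟩ := exists_deriv_eq_zero (f := G) hx1.2 hGcont (hGx1.trans hGδ.symm)
    have hx2' : x2 ∈ Ioo (0:ℝ) δ := ⟨hx1.1.trans hx2.1, hx2.2⟩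
    have hHx2 : H x2 = 0 := by
      rw [← (hGd x2 (hsub x2 hx2')).deriv]; exact hdx2
    -- Rolle 3 on H over [x2, δ]
    have hHcont : ContinuousOn H (Icc x2 δ) := by
      apply ContinuousOn.sub
      · intro x hx
        exact ((hdiff x ⟨hx2'.1.trans_le hx.1, hx.2⟩).2.2.continuousAt).continuousWithinAt
      · exact Continuous.continuousOn (by fun_prop)
    have hHδ : H δ = 0 := by simp [hH, hc]
    obtain ⟨x3, hx3, hdx3⟩ := exists_deriv_eq_zero (f := H) hx2.2 hHcont (hHx2.trans hHδ.symm)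
    have hx3' : x3 ∈ Ioo (0:ℝ) δ := ⟨hx2'.1.trans hx3.1, hx3.2⟩
    refine ⟨x3, hx3', ?_⟩
    have := (hHd x3 (hsub x3 hx3')).deriv
    rw [hdx3] at this
    linarith [this]
  constructor
  · -- L > M
    set w0 := x3 / 2 with hw0
    have hw0mem : w0 ∈ Ioc (0:ℝ) δ :=
      ⟨half_pos hx3mem.1, by linarith [hx3mem.1, hx3mem.2]⟩
    have hstep : M < deriv (deriv (deriv f)) w0 := by
      rw [← hx3]
      exact hanti hw0mem ⟨hx3mem.1, hx3mem.2.le⟩ (by linarith [hx3mem.1])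
    have hle : (((deriv (deriv (deriv f)) w0 : ℝ) : EReal)) ≤ L := by
      refine ge_of_tendsto hL ?_
      filter_upwards [Ioo_mem_nhdsGT_of_mem (⟨le_refl (0:ℝ), half_pos hx3mem.1⟩ : (0:ℝ) ∈ Ico 0 w0)] with w hw
      exact_mod_cast (hanti ⟨hw.1, by linarith [hw.2, hw0mem.2]⟩ hw0mem hw.2).le
    calc ((M : ℝ) : EReal) < ((deriv (deriv (deriv f)) w0 : ℝ) : EReal) := by
          exact_mod_cast hstep
      _ ≤ L := hle
  · rw [← hx3]
    exact hanti ⟨hx3mem.1, hx3mem.2.le⟩ ⟨hδ, le_refl δ⟩ hx3mem.2
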